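/- For all integers m ≥ 1 and n ≥ 1, the Einstein system for B(m,n) admits at least two distinct real solutions (x₁, x₂, c) with x₁ ≠ 0 and x₂ ≠ 0. -/

import Mathlib

set_option maxHeartbeats 2000000 in
/-- For all integers m ≥ 1 and n ≥ 1, the Einstein system for B(m,n) admits at
least two distinct real solutions (x₁, x₂, c) with x₁ ≠ 0 and x₂ ≠ 0. -/
theorem einstein_Bmn_two_solutions (m n : ℕ) (hm : 1 ≤ m) (hn : 1 ≤ n) :
    ∃ s t : ℝ × ℝ × ℝ, s ≠ t ∧
      (∀ p ∈ ({s, t} : Set (ℝ × ℝ × ℝ)),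
        p.1 ≠ 0 ∧ p.2.1 ≠ 0 ∧
        (1/4) * ((2 * (n : ℝ) / (2 * (m : ℝ) - 1)) * p.1^2 - 1)
          = p.2.2 * (1 - 2 * (n : ℝ) / (2 * (m : ℝ) - 1)) * p.1 ∧
        (1/4) * (((2 * (m : ℝ) + 1) / (2 * (n : ℝ) + 2)) * p.2.1^2 - 1)
          = p.2.2 * (1 - (2 * (m : ℝ) + 1) / (2 * (n : ℝ) + 2)) * p.2.1 ∧
        ((m : ℝ) / (2 * (m : ℝ) - 2 * (n : ℝ) - 1)) * p.1
          - ((2 * (n : ℝ) + 1) / (2 * (2 * (m : ℝ) - 2 * (n : ℝ) - 1))) * p.2.1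
          = 2 * p.2.2 + 1) := by
  have hm' : (1:ℝ) ≤ (m:ℝ) := by exact_mod_cast hm
  have hn' : (1:ℝ) ≤ (n:ℝ) := by exact_mod_cast hn
  set mr : ℝ := (m:ℝ) with hmr
  set nr : ℝ := (n:ℝ) with hnr
  have h2m1 : 2 * mr - 1 ≠ 0 := by intro h; nlinarith
  have h2n1 : 2 * nr + 1 ≠ 0 := by intro h; nlinarith
  have h2n2 : 2 * nr + 2 ≠ 0 := by intro h; nlinarith
  have hK : 2 * mr - 2 * nr - 1 ≠ 0 := by
    intro h
    have h2 : (2 * (m:ℤ) - 2 * (n:ℤ) - 1 : ℝ) = 0 := by push_cast; rw [hmr, hnr] at h; linarith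
    have h3 : (2 * (m:ℤ) - 2 * (n:ℤ) - 1 : ℤ) = 0 := by exact_mod_cast h2
    omega
  -- find a root t of the cubic, with t ≠ 0 and t ≠ 1
  obtain ⟨t, hR, ht0, ht1⟩ :
      ∃ t : ℝ, (nr + (-1) * mr + (-4) * mr * nr + 4 * mr ^ 2 + 4 * mr ^ 2 * nr + (-4) * mr ^ 3) + (1 + nr + (-4) * nr ^ 2 + (-1) * mr + 8 * mr * nr + 8 * mr * nr ^ 2 + (-8) * mr ^ 2 + (-20) * mr ^ 2 * nr + 12 * mr ^ 3) * t + ((-2) * nr + 4 * nr ^ 3 + 4 * mr + 2 * mr * nr + (-16) * mr * nr ^ 2 + 2 * mr ^ 2 + 24 * mr ^ 2 * nr + (-12) * mr ^ 3) * t^2 + ((-4) * nr ^ 3 + (-2) * mr * nr + 8 * mr * nr ^ 2 + 2 * mr ^ 2 + (-8) * mr ^ 2 * nr + 4 * mr ^ 3) * t^3 = 0 ∧ t ≠ 0 ∧ t ≠ 1 := by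
    by_cases hmn : m = n
    · subst hmn
      rw [← hnr] at *
      refine ⟨(2 * mr - 1)/(2 * mr), by field_simp; ring, ?_, ?_⟩
      · intro h
        rw [div_eq_zero_iff] at h
        rcases h with h | h
        · exact h2m1 h
        · nlinarith
      · intro h
        rw [div_eq_one_iff_eq (by intro h'; nlinarith)] at h
        nlinarith
    · set f : ℝ → ℝ := fun x => (nr + (-1) * mr + (-4) * mr * nr + 4 * mr ^ 2 + 4 * mr ^ 2 * nr + (-4) * mr ^ 3) + (1 + nr + (-4) * nr ^ 2 + (-1) * mr + 8 * mr * nr + 8 * mr * nr ^ 2 + (-8) * mr ^ 2 + (-20) * mr ^ 2 * nr + 12 * mr ^ 3) * x + ((-2) * nr + 4 * nr ^ 3 + 4 * mr + 2 * mr * nr + (-16) * mr * nr ^ 2 + 2 * mr ^ 2 + 24 * mr ^ 2 * nr + (-12) * mr ^ 3) * x^2 + ((-4) * nr ^ 3 + (-2) * mr * nr + 8 * mr * nr ^ 2 + 2 * mr ^ 2 + (-8) * mr ^ 2 * nr + 4 * mr ^ 3) * x^3 with hf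
      have hcont : ContinuousOn f (Set.Icc (0:ℝ) 1) := by fun_prop
      have hf0 : f 0 = (nr - mr) * (2 * mr - 1)^2 := by simp [hf]; ring
      have hf1 : f 1 = 2 * mr + 1 + 4 * nr * (mr - nr) := by simp [hf]; ring
      have hmnR : mr ≠ nr := by
        intro h; apply hmn
        have : (m:ℤ) = (n:ℤ) := by exact_mod_cast (hmr ▸ hnr ▸ h : (m:ℝ) = (n:ℝ))
        exact_mod_cast this
      rcases lt_or_gt_of_ne hmnR with hlt | hgt
      · -- m < n : f 0 > 0, f 1 < 0
        have hmn1 : mr + 1 ≤ nr := by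
          have : (m:ℤ) < (n:ℤ) := by exact_mod_cast (hmr ▸ hnr ▸ hlt : (m:ℝ) < (n:ℝ))
          have : ((m:ℤ) + 1 : ℝ) ≤ ((n:ℤ):ℝ) := by exact_mod_cast this
          push_cast at this; rw [← hmr, ← hnr] at this; linarith
        have h0 : 0 < f 0 := by rw [hf0]; nlinarith [sq_nonneg (2 * mr - 1)]
        have h1 : f 1 < 0 := by
          rw [hf1]
          nlinarith [mul_nonneg (by linarith : (0:ℝ) ≤ nr - mr - 1) (by linarith : (0:ℝ) ≤ 4 * nr)]
        obtain ⟨t, htmem, hft⟩ := intermediate_value_Icc' (by norm_num : (0:ℝ) ≤ 1) hcont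
          ⟨le_of_lt h1, le_of_lt h0⟩
        exact ⟨t, hft, fun h => absurd (h ▸ hft) (ne_of_gt h0), fun h => absurd (h ▸ hft) (ne_of_lt h1)⟩
      · -- m > n : f 0 < 0, f 1 > 0
        have hmn1 : nr + 1 ≤ mr := by
          have : (n:ℤ) < (m:ℤ) := by exact_mod_cast (hmr ▸ hnr ▸ hgt : (n:ℝ) < (m:ℝ))
          have : ((n:ℤ) + 1 : ℝ) ≤ ((m:ℤ):ℝ) := by exact_mod_cast this
          push_cast at this; rw [← hmr, ← hnr] at this; linarith
        have h0 : f 0 < 0 := by rw [hf0]; nlinarith [sq_nonneg (2 * mr - 1)]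
        have h1 : 0 < f 1 := by rw [hf1]; nlinarith
        obtain ⟨t, htmem, hft⟩ := intermediate_value_Icc (by norm_num : (0:ℝ) ≤ 1) hcont
          ⟨le_of_lt h0, le_of_lt h1⟩
        exact ⟨t, hft, fun h => absurd (h ▸ hft) (ne_of_lt h0), fun h => absurd (h ▸ hft) (ne_of_gt h1)⟩
  -- define c and x2
  obtain ⟨c, hv⟩ : ∃ c : ℝ, 4 * (2 * mr - 2 * nr - 1) * t * c = 2 * nr * t^2 - (2 * mr - 1) :=
    ⟨(2 * nr * t^2 - (2 * mr - 1)) / (4 * (2 * mr - 2 * nr - 1) * t), by have hK' : 2 * (mr - nr) - 1 ≠ 0 := (by intro h; apply hK; linarith); field_simp⟩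
  obtain ⟨x2, hu⟩ : ∃ x2 : ℝ, (2 * nr + 1) * x2 = 2 * (mr * t - (2 * mr - 2 * nr - 1) * (2 * c + 1)) :=
    ⟨2 * (mr * t - (2 * mr - 2 * nr - 1) * (2 * c + 1)) / (2 * nr + 1), by field_simp⟩
  have hG : (4 * (2 * mr - 2 * nr - 1) * t)^2 * (2 * nr + 1)^2 *
      ((2 * mr + 1) * x2^2 - (2 * nr + 2) - 4 * c * ((2 * nr + 2) - (2 * mr + 1)) * x2) = 0 := by
    linear_combination (32 * t ^ 2 + 16 * t ^ 2 * x2 + 192 * nr * t ^ 2 + 96 * nr * t ^ 2 * x2 + (-128) * nr * t ^ 2 * c + 384 * nr ^ 2 * t ^ 2 + 192 * nr ^ 2 * t ^ 2 * x2 + (-768) * nr ^ 2 * t ^ 2 * c + 256 * nr ^ 3 * t ^ 2 + 128 * nr ^ 3 * t ^ 2 * x2 + (-1536) * nr ^ 3 * t ^ 2 * c + (-1024) * nr ^ 4 * t ^ 2 * c + (-128) * mr * t ^ 2 + (-32) * mr * t ^ 2 * x2 + 128 * mr * t ^ 2 * c + 32 * mr * t ^ 3 + (-384) * mr * nr * t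 ^ 2 + (-64) * mr * nr * t ^ 2 * x2 + 1536 * mr * nr * t ^ 2 * c + 128 * mr * nr * t ^ 3 + 128 * mr * nr ^ 2 * t ^ 2 * x2 + 4608 * mr * nr ^ 2 * t ^ 2 * c + 128 * mr * nr ^ 2 * t ^ 3 + 512 * mr * nr ^ 3 * t ^ 2 + 256 * mr * nr ^ 3 * t ^ 2 * x2 + 4096 * mr * nr ^ 3 * t ^ 2 * c + (-64) * mr ^ 2 * t ^ 2 * x2 + (-768) * mr ^ 2 * t ^ 2 * c + (-64) * mr ^ 2 * t ^ 3 + (-768) * mr ^ 2 * nr * t ^ 2 + (-384) * mr ^ 2 * nr * t ^ 2 * x2 + (-4608) * mr ^ 2 * nr * t ^ 2 * c + (-1536) * mr ^ 2 * nr ^ 2 * t ^ 2 + (-512) * mr ^ 2 * nr ^ 2 * t ^ 2 * x2 + (-6144) * mr ^ 2 * nr ^ 2 * t ^ 2 * c + 256 * mr ^ 2 * nr ^ 2 * t ^ 3 + 512 * mr ^ 3 * t ^ 2 + 128 * mr ^ 3 * t ^ 2 * x2 + 1536 * mr ^ 3 * t ^ 2 * c + (-128) * mr ^ 3 * t ^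 3 + 1536 * mr ^ 3 * nr * t ^ 2 + 256 * mr ^ 3 * nr * t ^ 2 * x2 + 4096 * mr ^ 3 * nr * t ^ 2 * c + (-512) * mr ^ 3 * nr * t ^ 3 + (-512) * mr ^ 4 * t ^ 2 + (-1024) * mr ^ 4 * t ^ 2 * c + 256 * mr ^ 4 * t ^ 3) * hu + ((-32) * t + (-32) * nr + (-128) * nr * t + 128 * nr * t * c + (-128) * nr ^ 2 + 768 * nr ^ 2 * t * c + (-64) * nr ^ 2 * t ^ 2 + (-128) * nr ^ 3 + 512 * nr ^ 3 * t + 1536 * nr ^ 3 * t * c + (-256) * nr ^ 3 * t ^ 2 + 512 * nr ^ 4 * t + 1024 * nr ^ 4 * t * c + (-256) * nr ^ 4 * t ^ 2 + 32 * mr + 64 * mr * t + (-128) * mr * t * c + (-32) * mr * t ^ 2 + 320 * mr * nr + (-384) * mr * nr * t + (-1536) * mr * nr * t * c + 640 * mr * nr ^ 2 + (-2304) * mr * nr ^ 2 * t + (-4608) * mr * nr ^ 2 * t * c + 640 * mr * nr ^ 2 * t ^ 2 + 256 * mr * nr ^ 3 + (-2560) * mr * nr ^ 3 * t + (-4096)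 * mr * nr ^ 3 * t * c + 1024 * mr * nr ^ 3 * t ^ 2 + (-192) * mr ^ 2 + 384 * mr ^ 2 * t + 768 * mr ^ 2 * t * c + (-896) * mr ^ 2 * nr + 3072 * mr ^ 2 * nr * t + 4608 * mr ^ 2 * nr * t * c + (-768) * mr ^ 2 * nr * t ^ 2 + (-768) * mr ^ 2 * nr ^ 2 + 4608 * mr ^ 2 * nr ^ 2 * t + 6144 * mr ^ 2 * nr ^ 2 * t * c + (-1792) * mr ^ 2 * nr ^ 2 * t ^ 2 + 384 * mr ^ 3 + (-1280) * mr ^ 3 * t + (-1536) * mr ^ 3 * t * c + 384 * mr ^ 3 * t ^ 2 + 768 * mr ^ 3 * nr + (-3584) * mr ^ 3 * nr * t + (-4096) * mr ^ 3 * nr * t * c + 1536 * mr ^ 3 * nr * t ^ 2 + (-256) * mr ^ 4 + 1024 * mr ^ 4 * t + 1024 * mr ^ 4 * t * c + (-512) * mr ^ 4 * t ^ 2) * hv + (32 * (t - 1) * (2 * mr - 2 * nr - 1) ^ 2) * hR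
  have hGz : (2 * mr + 1) * x2^2 - (2 * nr + 2) - 4 * c * ((2 * nr + 2) - (2 * mr + 1)) * x2 = 0 := by
    have hKt : 4 * (2 * mr - 2 * nr - 1) * t ≠ 0 :=
      mul_ne_zero (mul_ne_zero (by norm_num) hK) ht0
    have h4 : (4 * (2 * mr - 2 * nr - 1) * t)^2 * (2 * nr + 1)^2 ≠ 0 :=
      mul_ne_zero (pow_ne_zero _ hKt) (pow_ne_zero _ h2n1)
    exact (mul_eq_zero.mp hG).resolve_left h4
  have E2 : (1/4) * (((2 * mr + 1) / (2 * nr + 2)) * x2^2 - 1)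
      = c * (1 - (2 * mr + 1) / (2 * nr + 2)) * x2 := by
    have hn1 : nr + 1 ≠ 0 := by intro h; apply h2n2; linarith
    field_simp
    linear_combination hGz
  have hx2ne : x2 ≠ 0 := by
    intro h
    rw [h] at E2
    norm_num at E2
  have E1 : (1/4) * ((2 * nr / (2 * mr - 1)) * t^2 - 1) = c * (1 - 2 * nr / (2 * mr - 1)) * t := by
    field_simp
    linear_combination -hv
  have hK' : 2 * (mr - nr) - 1 ≠ 0 := by intro h; apply hK; linarith
  have E3 : (mr / (2 * mr - 2 * nr - 1)) * t
      - ((2 * nr + 1) / (2 * (2 * mr - 2 * nr - 1))) * x2 = 2 * c + 1 := by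
    field_simp
    linear_combination -hu
  refine ⟨(1, 1, -1/4), (t, x2, c), ?_, ?_⟩
  · intro h
    exact ht1 ((congrArg Prod.fst h).symm)
  · intro p hp
    simp only [Set.mem_insert_iff, Set.mem_singleton_iff] at hp
    rcases hp with rfl | rfl
    · refine ⟨one_ne_zero, one_ne_zero, ?_, ?_, ?_⟩
      · show (1/4) * ((2 * nr / (2 * mr - 1)) * (1:ℝ)^2 - 1) = (-1/4) * (1 - 2 * nr / (2 * mr - 1)) * 1
        ring
      · show (1/4) * (((2 * mr + 1) / (2 * nr + 2)) * (1:ℝ)^2 - 1) = (-1/4) * (1 - (2 * mr + 1) / (2 * nr + 2)) * 1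
        ring
      · show (mr / (2 * mr - 2 * nr - 1)) * 1 - ((2 * nr + 1) / (2 * (2 * mr - 2 * nr - 1))) * 1
          = 2 * (-1/4) + 1
        field_simp
        ring
    · exact ⟨ht0, hx2ne, E1, E2, E3⟩
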